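/- The function g(θ₂) = arcsin(min(ε + sin θ₂, 1)) − arcsin(max(−ε + sin θ₂, −1)), defined for θ₂ ∈ [0, π/2) and fixed ε ∈ (0, 1), is strictly increasing in θ₂ on the region where both ε + sinθ₂ ≤ 1 and −ε + sinθ₂ ≥ −1, i.e., beams steered at larger elevation angles have larger half-power beamwidth. -/

import Mathlib

lemma aux_strictMono (ε : ℝ) (hε : ε ∈ Set.Ioo (0 : ℝ) 1) :
    StrictMonoOn (fun s : ℝ => Real.arcsin (ε + s) - Real.arcsin (-ε + s))
      (Set.Icc 0 (1 - ε)) := by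
  obtain ⟨hε0, hε1⟩ := hε
  apply StrictMonoOn.mono (s := Set.Icc (0:ℝ) (1 - ε))
  · apply strictMonoOn_of_deriv_pos (convex_Icc _ _)
    · exact ((Real.continuous_arcsin.comp (continuous_const.add continuous_id)).sub (Real.continuous_arcsin.comp (continuous_const.add continuous_id))).continuousOn
    · intro s hs
      rw [interior_Icc] at hs
      obtain ⟨hs0, hs1⟩ := hs
      have h1 : ε + s ≠ -1 := by nlinarith
      have h2 : ε + s ≠ 1 := by nlinarith
      have h3 : -ε + s ≠ -1 := by nlinarith
      have h4 : -ε + s ≠ 1 := by nlinarith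
      have d1 : HasDerivAt (fun s : ℝ => Real.arcsin (ε + s))
          (1 / Real.sqrt (1 - (ε + s) ^ 2)) s := by
        simpa [Function.comp_def] using (Real.hasDerivAt_arcsin h1 h2).comp s
          ((hasDerivAt_id s).const_add ε)
      have d2 : HasDerivAt (fun s : ℝ => Real.arcsin (-ε + s))
          (1 / Real.sqrt (1 - (-ε + s) ^ 2)) s := by
        simpa [Function.comp_def] using (Real.hasDerivAt_arcsin h3 h4).comp s
          ((hasDerivAt_id s).const_add (-ε))
      have hd : deriv (fun s : ℝ => Real.arcsin (ε + s) - Real.arcsin (-ε + s)) s = _ := (d1.sub d2).deriv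
      rw [hd]
      have hpos1 : (0:ℝ) < 1 - (ε + s) ^ 2 := by nlinarith
      have hpos2 : (0:ℝ) < 1 - (-ε + s) ^ 2 := by nlinarith
      have hlt : 1 - (ε + s) ^ 2 < 1 - (-ε + s) ^ 2 := by nlinarith
      have hsq : Real.sqrt (1 - (ε + s) ^ 2) < Real.sqrt (1 - (-ε + s) ^ 2) :=
        Real.sqrt_lt_sqrt hpos1.le hlt
      have h5 : (0:ℝ) < Real.sqrt (1 - (ε + s) ^ 2) := Real.sqrt_pos.mpr hpos1
      have := one_div_lt_one_div_of_lt h5 hsq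
      linarith
  · exact le_refl _

/-- The half-power beamwidth is strictly increasing in the steering elevation angle. -/
theorem stmt_6 (ε : ℝ) (hε : ε ∈ Set.Ioo (0 : ℝ) 1) :
    StrictMonoOn
      (fun θ₂ : ℝ =>
        Real.arcsin (min (ε + Real.sin θ₂) 1) -
          Real.arcsin (max (-ε + Real.sin θ₂) (-1)))
      {θ₂ : ℝ | θ₂ ∈ Set.Ico 0 (Real.pi / 2) ∧
        ε + Real.sin θ₂ ≤ 1 ∧ -1 ≤ -ε + Real.sin θ₂} := by
  intro x hx y hy hxy
  obtain ⟨⟨hx0, hxlt⟩, hx1, hx2⟩ := hx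
  obtain ⟨⟨hy0, hylt⟩, hy1, hy2⟩ := hy
  have hpi : (0:ℝ) < Real.pi := Real.pi_pos
  have hsin : Real.sin x < Real.sin y := by
    apply Real.strictMonoOn_sin ⟨by linarith, by linarith⟩ ⟨by linarith, by linarith⟩ hxy
  have hsx0 : 0 ≤ Real.sin x := Real.sin_nonneg_of_nonneg_of_le_pi hx0 (by linarith)
  have hsy0 : 0 ≤ Real.sin y := Real.sin_nonneg_of_nonneg_of_le_pi hy0 (by linarith)
  simp only [min_eq_left hx1, min_eq_left hy1, max_eq_left hx2, max_eq_left hy2]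
  have := aux_strictMono ε hε (Set.mem_Icc.mpr ⟨hsx0, by linarith⟩)
    (Set.mem_Icc.mpr ⟨hsy0, by linarith⟩) hsin
  simpa using this
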